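/- Let J = diag(1, 0, 0; 0, 0, 1; 0, 1, 0) be the 3×3 Hermitian matrix [[1,0,0],[0,0,1],[0,1,0]] and A = [[α,0,0],[0,0,β],[0,β,1]] with α, β ∈ ℝ. Let B be the 6×6 Hermitian matrix of the bihomogeneous form ⟨Az,z⟩⟨Jz,z⟩ with respect to the degree-2 Veronese monomials (z₀², z₀z₁, z₀z₂, z₁², z₁z₂, z₂²). Then B never has exactly one negative eigenvalue together with rank ≥ 2: in fact, if (α,β) ≠ (0,0) then B has at least two negative eigenvalues. -/

import Mathlib

open Matrix

@[simp]
lemma cons_val_five18 {γ : Type*} {m : ℕ} (x : γ) (u : Fin m.succ.succ.succ.succ.succ → γ) :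
    Matrix.vecCons x u 5 = Matrix.vecHead (Matrix.vecTail (Matrix.vecTail
      (Matrix.vecTail (Matrix.vecTail u)))) :=
  rfl


open Matrix in
lemma key18 {n : Type*} [Fintype n] [DecidableEq n] {B : Matrix n n ℝ} (hB : B.IsHermitian)
    (u w : n → ℝ)
    (h : ∀ a b : ℝ, (a, b) ≠ (0, 0) → (a • u + b • w) ⬝ᵥ (B *ᵥ (a • u + b • w)) < 0) :
    2 ≤ Fintype.card {i // hB.eigenvalues i < 0} := by
  classical
  set U : Matrix n n ℝ := (hB.eigenvectorUnitary : Matrix n n ℝ) with hU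
  set y : (n → ℝ) → (n → ℝ) := fun x => (star U) *ᵥ x with hy
  have hq : ∀ x : n → ℝ, x ⬝ᵥ (B *ᵥ x) = ∑ i, hB.eigenvalues i * (y x i)^2 := by
    intro x
    conv_lhs => rw [hB.spectral_theorem]
    rw [Unitary.conjStarAlgAut_apply, ← Matrix.mulVec_mulVec, ← Matrix.mulVec_mulVec, Matrix.dotProduct_mulVec]
    have hvm : x ᵥ* U = y x := by
      simp only [hy, Matrix.star_eq_conjTranspose,
        Matrix.conjTranspose_eq_transpose_of_trivial, Matrix.mulVec_transpose]
    rw [hvm]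
    simp [Matrix.mulVec_diagonal, dotProduct, Function.comp]
    apply Finset.sum_congr rfl
    intro i _
    ring
  have hlin : ∀ (a b : ℝ) (i : n), y (a • u + b • w) i = a * y u i + b * y w i := by
    intro a b i
    simp [hy, Matrix.mulVec_add, Matrix.mulVec_smul, smul_eq_mul]
  by_contra hcard
  push_neg at hcard
  -- at most one negative eigenvalue
  have hone : ∀ i j : n, hB.eigenvalues i < 0 → hB.eigenvalues j < 0 → i = j := by
    intro i j hi hj
    by_contra hij
    have : 2 ≤ Fintype.card {i // hB.eigenvalues i < 0} :=
      Fintype.card_le_of_injective (fun b : Bool => if b then ⟨i, hi⟩ else ⟨j, hj⟩)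
        (by intro a b hab; cases a <;> cases b <;> simp_all)
    omega
  by_cases hex : ∃ i₀, hB.eigenvalues i₀ < 0
  · obtain ⟨i₀, hi₀⟩ := hex
    have hpos : ∀ j, j ≠ i₀ → 0 ≤ hB.eigenvalues j := by
      intro j hj
      by_contra hneg
      exact hj (hone j i₀ (lt_of_not_ge hneg) hi₀)
    set a : ℝ := if y u i₀ = 0 ∧ y w i₀ = 0 then 1 else y w i₀ with ha
    set b : ℝ := if y u i₀ = 0 ∧ y w i₀ = 0 then 0 else -(y u i₀) with hb
    have hab : (a, b) ≠ (0, 0) := by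
      by_cases hc : y u i₀ = 0 ∧ y w i₀ = 0
      · simp [ha, hb, hc]
      · rw [not_and_or] at hc
        simp only [ha, hb, if_neg (by tauto : ¬(y u i₀ = 0 ∧ y w i₀ = 0)),
          Prod.mk.injEq, ne_eq, not_and_or, neg_eq_zero]
        tauto
    have hzero : y (a • u + b • w) i₀ = 0 := by
      rw [hlin]
      by_cases hc : y u i₀ = 0 ∧ y w i₀ = 0
      · simp only [ha, hb, if_pos hc, hc.1, hc.2]
        ring
      · simp only [ha, hb, if_neg hc]
        ring
    have := h a b hab
    rw [hq] at this
    have hnn : 0 ≤ ∑ i, hB.eigenvalues i * (y (a • u + b • w) i)^2 := by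
      apply Finset.sum_nonneg
      intro i _
      by_cases hi : i = i₀
      · rw [hi, hzero]; simp
      · exact mul_nonneg (hpos i hi) (sq_nonneg _)
    linarith
  · push_neg at hex
    have := h 1 0 (by simp)
    rw [hq] at this
    have hnn : 0 ≤ ∑ i, hB.eigenvalues i * (y ((1:ℝ) • u + (0:ℝ) • w) i)^2 :=
      Finset.sum_nonneg fun i _ => mul_nonneg (hex i) (sq_nonneg _)
    linarith

noncomputable def Bmat18 (α β : ℝ) : Matrix (Fin 6) (Fin 6) ℝ :=
  !![α, 0, 0, 0, 0, 0;
     0, 0, α + β, 0, 0, 0;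
     0, α + β, 1, 0, 0, 0;
     0, 0, 0, 0, 0, β;
     0, 0, 0, 0, 2 * β, 1;
     0, 0, 0, β, 1, 0]

theorem stmt_18 (α β : ℝ) (hαβ : (α, β) ≠ (0, 0))
    (hB : (Bmat18 α β).IsHermitian) :
    2 ≤ Fintype.card {i // hB.eigenvalues i < 0} := by
  rcases lt_or_ge β 0 with hβ | hβ
  · obtain ⟨s, hs⟩ : ∃ s : ℝ, s = 1/(4*β^2) + 1 := ⟨_, rfl⟩
    have hβ2 : (0:ℝ) < β^2 := by nlinarith
    have hs4 : 4*β^2*s = 1 + 4*β^2 := by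
      rw [hs]; field_simp
      rw [mul_add, mul_one_div_cancel hβ2.ne']; ring
    apply key18 hB ![0,0,0,0,1,0] ![0,0,0,s,0,1]
    intro a b hab
    have hor : a ≠ 0 ∨ b ≠ 0 := by
      by_contra hc; push_neg at hc; exact hab (by simp [hc.1, hc.2])
    have hx : a • ![0,0,0,0,1,0] + b • ![(0:ℝ),0,0,s,0,1] = ![0,0,0,b*s,a,b] := by
      funext i; fin_cases i <;> simp <;> ring
    rw [hx]
    have hq : ![(0:ℝ),0,0,b*s,a,b] ⬝ᵥ (Bmat18 α β *ᵥ ![0,0,0,b*s,a,b])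
        = 2*β*a^2 + 2*a*b + 2*β*s*b^2 := by
      simp [Bmat18, Matrix.mulVec, dotProduct, Fin.sum_univ_six, Matrix.vecHead, Matrix.vecTail]
      ring
    rw [hq]
    rcases hor with ha | hb
    · rcases eq_or_ne b 0 with rfl | hb
      · nlinarith [sq_pos_of_ne_zero ha]
      · nlinarith [sq_nonneg (2*β*a + b), mul_pos hβ2 (sq_pos_of_ne_zero hb)]
    · nlinarith [sq_nonneg (2*β*a + b), mul_pos hβ2 (sq_pos_of_ne_zero hb)]
  · rcases eq_or_ne (α + β) 0 with hc | hc
    · have hβpos : 0 < β := by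
        rcases lt_or_eq_of_le hβ with h | h
        · exact h
        · exfalso; apply hαβ
          have h1 : α = 0 := by linarith
          simp [h1, ← h]
      have hα : α = -β := by linarith
      apply key18 hB ![0,0,0,1,1/2,-1] ![1,0,0,0,0,0]
      intro a b hab
      have hor : a ≠ 0 ∨ b ≠ 0 := by
        by_contra hcc; push_neg at hcc; exact hab (by simp [hcc.1, hcc.2])
      have hx : a • ![0,0,0,1,1/2,-1] + b • ![(1:ℝ),0,0,0,0,0] = ![b,0,0,a,a/2,-a] := by
        funext i; fin_cases i <;> simp <;> ring
      rw [hx]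
      have hq : ![(b:ℝ),0,0,a,a/2,-a] ⬝ᵥ (Bmat18 α β *ᵥ ![b,0,0,a,a/2,-a])
          = α*b^2 - (3*β/2)*a^2 - a^2 := by
        simp [Bmat18, Matrix.mulVec, dotProduct, Fin.sum_univ_six, Matrix.vecHead, Matrix.vecTail]
        ring
      rw [hq, hα]
      rcases hor with ha | hb
      · nlinarith [sq_pos_of_ne_zero ha, sq_nonneg b]
      · nlinarith [sq_pos_of_ne_zero hb, sq_nonneg a]
    · apply key18 hB ![0,0,0,1,1/2,-1] ![0,-1/(α+β),1,0,0,0]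
      intro a b hab
      have hor : a ≠ 0 ∨ b ≠ 0 := by
        by_contra hcc; push_neg at hcc; exact hab (by simp [hcc.1, hcc.2])
      have hx : a • ![0,0,0,1,1/2,-1] + b • ![(0:ℝ),-1/(α+β),1,0,0,0]
          = ![0,-b/(α+β),b,a,a/2,-a] := by
        funext i; fin_cases i <;> simp <;> ring
      rw [hx]
      have hq : ![(0:ℝ),-b/(α+β),b,a,a/2,-a] ⬝ᵥ (Bmat18 α β *ᵥ ![0,-b/(α+β),b,a,a/2,-a])
          = -b^2 - (3*β/2)*a^2 - a^2 := by
        simp [Bmat18, Matrix.mulVec, dotProduct, Fin.sum_univ_six, Matrix.vecHead, Matrix.vecTail]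
        field_simp
        ring
      rw [hq]
      rcases hor with ha | hb
      · nlinarith [sq_pos_of_ne_zero ha, sq_nonneg b]
      · nlinarith [sq_pos_of_ne_zero hb, sq_nonneg a]
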